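/- For a k-dimensional linear code C ⊆ F_q^n, the coverage depth expectation satisfies E[C] = n·H_n − sum_{s=k}^{n-1} α(C,s)/binom(n-1,s), where α(C,s) is the number of information sets of C of cardinality s and H_n is the n-th harmonic number. -/

import Mathlib

/-- Gaussian binomial coefficient as a polynomial in `q`, evaluated at an integer. -/
def qb (q : ℤ) : ℕ → ℕ → ℤ
  | _, 0 => 1
  | 0, _+1 => 0
  | n+1, k+1 => qb q n k + q ^ (k+1) * qb q n (k+1)

/-- Hamming weight of a vector. -/
noncomputable def hamWt {R : Type*} [Zero R] {n : ℕ} (x : Fin n → R) : ℕ :=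
  Nat.card {i : Fin n // x i ≠ 0}

/-- The `n`-th harmonic number. -/
noncomputable def harm (n : ℕ) : ℝ := ∑ i ∈ Finset.range n, (1 : ℝ) / (i + 1)

/-- Expected number of i.i.d. uniform draws of columns of `G` (with replacement)
until the drawn columns span `F^k`, written as `∑_{t≥0} P(T > t)`. -/
noncomputable def coverDepth {F : Type*} [Field F] {k n : ℕ}
    (G : Matrix (Fin k) (Fin n) F) : ℝ :=
  ∑' t : ℕ, (Nat.card {f : Fin t → Fin n //
      Submodule.span F (Set.range fun i => fun r => G r (f i)) ≠ ⊤} : ℝ) / (n : ℝ) ^ t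

/-- Vectors whose support is contained in the finite set `S`. -/
def zeroOutside (F : Type*) [Field F] (n : ℕ) (S : Finset (Fin n)) :
    Submodule F (Fin n → F) where
  carrier := {x | ∀ i ∉ S, x i = 0}
  add_mem' := by intro a b ha hb i hi; simp [ha i hi, hb i hi]
  zero_mem' := by intro i hi; rfl
  smul_mem' := by intro c a ha i hi; simp [ha i hi]

/-- The dual code with respect to the standard bilinear form. -/
def dualCode (F : Type*) [Field F] (n : ℕ) (C : Submodule F (Fin n → F)) :
    Submodule F (Fin n → F) where
  carrier := {y | ∀ x ∈ C, ∑ i, x i * y i = 0}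
  add_mem' := by
    intro a b ha hb x hx
    simp only [Pi.add_apply, mul_add, Finset.sum_add_distrib, ha x hx, hb x hx, add_zero]
  zero_mem' := by intro x hx; simp
  smul_mem' := by
    intro c a ha x hx
    simp only [Pi.smul_apply, smul_eq_mul, mul_left_comm, ← Finset.mul_sum, ha x hx, mul_zero]

/-- Projection onto the coordinates indexed by `S`. -/
def projS (F : Type*) [Field F] {n : ℕ} (S : Finset (Fin n)) :
    (Fin n → F) →ₗ[F] ({x // x ∈ S} → F) :=
  LinearMap.funLeft F F (fun i => (i : Fin n))

/-- The extension code of `C` over an extension field `E`. -/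
def extCode {F E : Type*} [Field F] [Field E] [Algebra F E] {n : ℕ}
    (C : Submodule F (Fin n → F)) : Submodule E (Fin n → E) :=
  Submodule.span E ((fun c : Fin n → F => fun i => algebraMap F E (c i)) '' C)


section CoverAux

open Finset

/-- number of `t`-tuples from `Fin n` whose set of values is exactly `U`. -/
def sc (n t : ℕ) (U : Finset (Fin n)) : ℕ :=
  (Finset.univ.filter fun f : Fin t → Fin n => Finset.image f Finset.univ = U).card

lemma sc_zero (n : ℕ) (U : Finset (Fin n)) : sc n 0 U = if U = ∅ then 1 else 0 := by
  unfold sc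
  have h : ∀ f : Fin 0 → Fin n, Finset.image f Finset.univ = (∅ : Finset (Fin n)) := by
    intro f; simp
  rcases eq_or_ne U ∅ with rfl | hU
  · rw [Finset.filter_true_of_mem (fun f _ => h f)]
    simp
  · rw [Finset.filter_false_of_mem (fun f _ => by rw [h f]; exact fun e => hU e.symm)]
    simp [hU]

lemma image_cons_univ {n t : ℕ} (a : Fin n) (g : Fin t → Fin n) :
    Finset.image (Fin.cons a g) Finset.univ = insert a (Finset.image g Finset.univ) := by
  ext x
  simp [Fin.exists_fin_succ, eq_comm]

lemma insert_eq_iff' {n : ℕ} (a : Fin n) (V U : Finset (Fin n)) :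
    insert a V = U ↔ a ∈ U ∧ (V = U ∨ V = U.erase a) := by
  constructor
  · rintro rfl
    refine ⟨Finset.mem_insert_self a V, ?_⟩
    by_cases ha : a ∈ V
    · left; rw [Finset.insert_eq_self.mpr ha]
    · right
      ext x
      simp only [Finset.mem_erase, Finset.mem_insert]
      constructor
      · intro hx; exact ⟨fun e => ha (e ▸ hx), Or.inr hx⟩
      · rintro ⟨hxa, (h | hx)⟩
        · exact absurd h hxa
        · exact hx
  · rintro ⟨ha, (rfl | rfl)⟩
    · exact Finset.insert_eq_self.mpr ha
    · exact Finset.insert_erase ha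

lemma sc_succ (n t : ℕ) (U : Finset (Fin n)) :
    sc n (t+1) U = ∑ a ∈ U, (sc n t U + sc n t (U.erase a)) := by
  have key : ∀ a : Fin n,
      (∑ g : Fin t → Fin n, if Finset.image (Fin.cons a g) Finset.univ = U then (1:ℕ) else 0)
        = if a ∈ U then sc n t U + sc n t (U.erase a) else 0 := by
    intro a
    by_cases ha : a ∈ U
    · have hne : U ≠ U.erase a := fun h => (Finset.erase_eq_self.mp h.symm) ha
      rw [if_pos ha]
      have step : ∀ g : Fin t → Fin n,
          (if Finset.image (Fin.cons a g) Finset.univ = U then (1:ℕ) else 0)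
          = (if Finset.image g Finset.univ = U then (1:ℕ) else 0)
            + (if Finset.image g Finset.univ = U.erase a then (1:ℕ) else 0) := by
        intro g
        simp only [image_cons_univ, insert_eq_iff']
        by_cases h1 : Finset.image g Finset.univ = U
        · have h2 : Finset.image g Finset.univ ≠ U.erase a := by rw [h1]; exact hne
          simp [h1, h2, ha, hne]
        · by_cases h2 : Finset.image g Finset.univ = U.erase a <;> simp [h1, h2, ha]
      rw [Finset.sum_congr rfl fun g _ => step g, Finset.sum_add_distrib]
      unfold sc
      rw [Finset.card_filter, Finset.card_filter]
    · rw [if_neg ha]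
      refine Finset.sum_eq_zero fun g _ => ?_
      simp only [image_cons_univ, insert_eq_iff']
      rw [if_neg (by tauto)]
  calc sc n (t+1) U
      = ∑ f : Fin (t+1) → Fin n, if Finset.image f Finset.univ = U then (1:ℕ) else 0 := by
        unfold sc; rw [Finset.card_filter]
    _ = ∑ p : Fin n × (Fin t → Fin n),
          if Finset.image (Fin.cons p.1 p.2) Finset.univ = U then (1:ℕ) else 0 := by
        rw [← Equiv.sum_comp (Fin.consEquiv (fun _ => Fin n))
          (fun f => if Finset.image f Finset.univ = U then (1:ℕ) else 0)]
        rfl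
    _ = ∑ a : Fin n, ∑ g : Fin t → Fin n,
          if Finset.image (Fin.cons a g) Finset.univ = U then (1:ℕ) else 0 := by
        rw [Fintype.sum_prod_type]
    _ = ∑ a : Fin n, if a ∈ U then sc n t U + sc n t (U.erase a) else 0 :=
        Finset.sum_congr rfl fun a _ => key a
    _ = ∑ a ∈ U, (sc n t U + sc n t (U.erase a)) := by
        rw [Finset.sum_ite_mem, Finset.univ_inter]

lemma sc_le (n t : ℕ) (U : Finset (Fin n)) : sc n t U ≤ U.card ^ t := by
  unfold sc
  calc (Finset.univ.filter fun f : Fin t → Fin n => Finset.image f Finset.univ = U).card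
      ≤ (Fintype.piFinset fun _ : Fin t => U).card := by
        apply Finset.card_le_card
        intro f hf
        rw [Finset.mem_filter] at hf
        rw [Fintype.mem_piFinset]
        intro i
        rw [← hf.2]
        exact Finset.mem_image_of_mem f (Finset.mem_univ i)
    _ = U.card ^ t := by rw [Fintype.card_piFinset]; simp

lemma summable_sc (n : ℕ) (U : Finset (Fin n)) (hU : U.card < n) :
    Summable (fun t : ℕ => (sc n t U : ℝ) / n ^ t) := by
  have hn : (0:ℝ) < n := by exact_mod_cast Nat.pos_of_ne_zero (by omega)
  have hr : (U.card : ℝ) / n < 1 := by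
    rw [div_lt_one hn]; exact_mod_cast hU
  have hr0 : (0:ℝ) ≤ (U.card : ℝ) / n := by positivity
  refine Summable.of_nonneg_of_le (fun t => by positivity) (fun t => ?_)
    (summable_geometric_of_lt_one hr0 hr)
  rw [div_pow]
  apply div_le_div_of_nonneg_right ?_ (by positivity)
  · exact_mod_cast sc_le n t U

lemma A_eq (n : ℕ) (U : Finset (Fin n)) : U.card < n →
    ∑' t : ℕ, (sc n t U : ℝ) / n ^ t = 1 / ((n-1).choose U.card : ℝ) := by
  induction U using Finset.strongInduction with
  | _ U ih =>
  intro hU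
  have hn : 0 < n := Nat.pos_of_ne_zero (by omega)
  have hnR : (0:ℝ) < n := by exact_mod_cast hn
  have hn0 : (n:ℝ) ≠ 0 := ne_of_gt hnR
  rcases Finset.eq_empty_or_nonempty U with rfl | hne
  · have hf : ∀ t : ℕ, (sc n t (∅ : Finset (Fin n)) : ℝ) / n ^ t
        = if t = 0 then 1 else 0 := by
      intro t
      cases t with
      | zero => simp [sc_zero]
      | succ t => simp [sc_succ]
    rw [tsum_congr hf, tsum_ite_eq]
    simp
  · set u := U.card with hu
    have hu1 : 1 ≤ u := Finset.card_pos.mpr hne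
    have hErase : ∀ a ∈ U, (U.erase a).card < n :=
      fun a ha => lt_of_le_of_lt (Finset.card_erase_le) hU
    have hs : Summable (fun t : ℕ => (sc n t U : ℝ) / n ^ t) := summable_sc n U hU
    have hsa : ∀ a ∈ U, Summable (fun t : ℕ => (sc n t (U.erase a) : ℝ) / n ^ t) :=
      fun a ha => summable_sc n _ (hErase a ha)
    set B : ℝ := 1 / ((n-1).choose (u-1) : ℝ) with hB
    have hBa : ∀ a ∈ U, ∑' t : ℕ, (sc n t (U.erase a) : ℝ) / n ^ t = B := by
      intro a ha
      rw [ih (U.erase a) (Finset.erase_ssubset ha) (hErase a ha),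
        Finset.card_erase_of_mem ha]
    set A : ℝ := ∑' t : ℕ, (sc n t U : ℝ) / n ^ t with hA
    have hrec : ∀ t : ℕ, (sc n (t+1) U : ℝ) / n ^ (t+1)
        = ∑ a ∈ U, (1/n * ((sc n t U : ℝ) / n ^ t)
            + 1/n * ((sc n t (U.erase a) : ℝ) / n ^ t)) := by
      intro t
      rw [sc_succ]
      push_cast
      rw [Finset.sum_div]
      refine Finset.sum_congr rfl fun a _ => ?_
      rw [pow_succ]
      ring
    have hAeq : A = (u : ℝ) * (1/n * A + 1/n * B) := by
      calc A = (sc n 0 U : ℝ) / n ^ 0 + ∑' t : ℕ, (sc n (t+1) U : ℝ) / n ^ (t+1) :=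
            Summable.tsum_eq_zero_add hs
        _ = ∑' t : ℕ, (sc n (t+1) U : ℝ) / n ^ (t+1) := by
            rw [sc_zero, if_neg (Finset.nonempty_iff_ne_empty.mp hne)]
            simp
        _ = ∑' t : ℕ, ∑ a ∈ U, (1/n * ((sc n t U : ℝ) / n ^ t)
              + 1/n * ((sc n t (U.erase a) : ℝ) / n ^ t)) := tsum_congr hrec
        _ = ∑ a ∈ U, ∑' t : ℕ, (1/n * ((sc n t U : ℝ) / n ^ t)
              + 1/n * ((sc n t (U.erase a) : ℝ) / n ^ t)) := by
            refine Summable.tsum_finsetSum fun a ha => ?_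
            exact ((hs.mul_left _).add ((hsa a ha).mul_left _))
        _ = ∑ a ∈ U, (1/n * A + 1/n * B) := by
            refine Finset.sum_congr rfl fun a ha => ?_
            rw [Summable.tsum_add (hs.mul_left _) ((hsa a ha).mul_left _),
              tsum_mul_left, tsum_mul_left, hBa a ha]
        _ = (u : ℝ) * (1/n * A + 1/n * B) := by
            rw [Finset.sum_const, nsmul_eq_mul]
    have huR : (u : ℝ) < n := by exact_mod_cast hU
    have hnu : (0:ℝ) < (n:ℝ) - u := by linarith
    have h1 : ((n:ℝ) - u) * A = u * B := by
      have h2 : (n:ℝ) * A = u * A + u * B := by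
        calc (n:ℝ) * A = n * ((u:ℝ) * (1/n*A + 1/n*B)) := by rw [← hAeq]
          _ = u * A + u * B := by field_simp
      nlinarith [h2]
    have hCb : 0 < (n-1).choose (u-1) := Nat.choose_pos (by omega)
    have hCa : 0 < (n-1).choose u := Nat.choose_pos (by omega)
    have hnat : (n-1).choose u * u = (n-1).choose (u-1) * (n - u) := by
      have h := Nat.choose_succ_right_eq (n-1) (u-1)
      have e1 : u - 1 + 1 = u := by omega
      have e2 : n - 1 - (u - 1) = n - u := by omega
      rw [e1, e2] at h
      exact h
    have hcast : ((n-1).choose u : ℝ) * u = ((n-1).choose (u-1) : ℝ) * ((n:ℝ) - u) := by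
      have := congrArg (Nat.cast : ℕ → ℝ) hnat
      push_cast [Nat.cast_sub (le_of_lt hU)] at this
      linarith [this]
    have hCbR : ((n-1).choose (u-1) : ℝ) ≠ 0 := by positivity
    have hCaR : ((n-1).choose u : ℝ) ≠ 0 := by positivity
    rw [hB] at h1
    have h3 : ((n:ℝ) - u) * A * ((n-1).choose (u-1) : ℝ) = u := by
      rw [h1]; field_simp
    have h5 : (((n:ℝ) - u) * ((n-1).choose (u-1) : ℝ)) * (A * ((n-1).choose u : ℝ) - 1) = 0 := by
      linear_combination ((n-1).choose u : ℝ) * h3 + hcast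
    have h6 : A * ((n-1).choose u : ℝ) - 1 = 0 := by
      rcases mul_eq_zero.mp h5 with h | h
      · exact absurd h (mul_ne_zero (ne_of_gt hnu) hCbR)
      · exact h
    rw [eq_div_iff hCaR]
    linarith



lemma sc_def (n t : ℕ) (U : Finset (Fin n))
    [DecidablePred fun f : Fin t → Fin n => Finset.image f Finset.univ = U] :
    sc n t U
      = (Finset.univ.filter fun f : Fin t → Fin n => Finset.image f Finset.univ = U).card := by
  unfold sc
  congr 1
  rw [Finset.filter_congr_decidable, Finset.filter_congr_decidable]

theorem stmt8 {F : Type*} [Field F] [Fintype F] {k n : ℕ} (hk : 2 ≤ k) (hkn : k ≤ n)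
    (G : Matrix (Fin k) (Fin n) F) (hG : G.rank = k) :
    coverDepth G = n * harm n - ∑ s ∈ Finset.Icc k (n - 1),
      (Nat.card {S : Finset (Fin n) // S.card = s ∧
          Submodule.span F ((fun j => fun r => G r j) '' (S : Set (Fin n))) = ⊤} : ℝ) /
        ((n - 1).choose s) := by
  classical
  have hn2 : 2 ≤ n := hk.trans hkn
  have hn : 0 < n := by omega
  have hnR : (0:ℝ) < n := by exact_mod_cast hn
  -- the full set of columns spans
  have hspan_univ : Submodule.span F
      ((fun j => fun r => G r j) '' ((Finset.univ : Finset (Fin n)) : Set (Fin n))) = ⊤ := by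
    have h1 : LinearMap.range G.mulVecLin = ⊤ := by
      apply Submodule.eq_top_of_finrank_eq
      rw [← Matrix.rank, hG, Module.finrank_fin_fun]
    have h2 : Set.range G.transpose
        = (fun j => fun r => G r j) '' ((Finset.univ : Finset (Fin n)) : Set (Fin n)) := by
      rw [Finset.coe_univ, Set.image_univ]; rfl
    rw [← h2]; exact (Matrix.range_mulVecLin G).symm.trans h1
  -- spanning sets have at least k elements
  have hcard_span : ∀ U : Finset (Fin n),
      Submodule.span F ((fun j => fun r => G r j) '' (U : Set (Fin n))) = ⊤ → k ≤ U.card := by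
    intro U h
    have h2 : ((U.image (fun j => fun r => G r j)) : Set (Fin k → F))
        = (fun j => fun r => G r j) '' (U : Set (Fin n)) := Finset.coe_image
    calc k = Module.finrank F (Fin k → F) := (Module.finrank_fin_fun F).symm
      _ = Module.finrank F (Submodule.span F
            ((U.image (fun j => fun r => G r j)) : Set (Fin k → F))) := by
          rw [h2, h, finrank_top]
      _ ≤ (U.image (fun j => fun r => G r j)).card := by
          have := finrank_span_finset_le_card (R := F) (U.image (fun j => fun r => G r j))
          rwa [Set.finrank] at this
      _ ≤ U.card := Finset.card_image_le
  -- the family of non-spanning subsets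
  set W : Finset (Finset (Fin n)) := Finset.univ.filter
    (fun U : Finset (Fin n) =>
      Submodule.span F ((fun j => fun r => G r j) '' (U : Set (Fin n))) ≠ ⊤) with hW
  have hWcard : ∀ U ∈ W, U.card < n := by
    intro U hU
    have hle : U.card ≤ n := by
      have := Finset.card_le_univ U
      simpa using this
    rcases eq_or_lt_of_le hle with he | h
    · exfalso
      have hUu : U = Finset.univ := Finset.eq_univ_of_card U (by simpa using he)
      rw [Finset.mem_filter] at hU
      exact hU.2 (by rw [hUu]; exact hspan_univ)
    · exact h
  -- rewrite the count in coverDepth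
  have hN : ∀ t : ℕ, Nat.card {f : Fin t → Fin n //
        Submodule.span F (Set.range fun i => fun r => G r (f i)) ≠ ⊤}
      = ∑ U ∈ W, sc n t U := by
    intro t
    rw [Nat.card_eq_fintype_card, Fintype.card_subtype]
    have hfilter : (Finset.univ.filter fun f : Fin t → Fin n =>
        Submodule.span F (Set.range fun i => fun r => G r (f i)) ≠ ⊤)
      = (Finset.univ.filter fun f : Fin t → Fin n =>
        Submodule.span F ((fun j => fun r => G r j) ''
          ((Finset.image f Finset.univ : Finset (Fin n)) : Set (Fin n))) ≠ ⊤) := by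
      apply Finset.filter_congr
      intro f _
      have he : (Set.range fun i => fun r => G r (f i))
          = (fun j => fun r => G r j) ''
            ((Finset.image f Finset.univ : Finset (Fin n)) : Set (Fin n)) := by
        rw [Finset.coe_image, Finset.coe_univ, Set.image_univ, ← Set.range_comp]
        rfl
      rw [he]
    rw [hfilter]
    rw [Finset.card_eq_sum_card_fiberwise
      (f := fun f : Fin t → Fin n => Finset.image f Finset.univ) (t := W)
      (fun f hf => by
        rw [Finset.mem_coe, Finset.mem_filter] at hf
        rw [Finset.mem_coe, hW, Finset.mem_filter]
        exact ⟨Finset.mem_univ _, hf.2⟩)]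
    refine Finset.sum_congr rfl fun U hU => ?_
    rw [sc_def, Finset.filter_filter]
    congr 1
    apply Finset.filter_congr
    intro f _
    rw [hW, Finset.mem_filter] at hU
    constructor
    · exact fun h => h.2
    · intro h
      refine ⟨?_, h⟩
      rw [h]
      exact hU.2
  -- coverDepth as a sum over non-spanning sets
  have hcover : coverDepth G = ∑ U ∈ W, 1 / ((n-1).choose U.card : ℝ) := by
    rw [coverDepth]
    calc ∑' t : ℕ, (Nat.card {f : Fin t → Fin n //
          Submodule.span F (Set.range fun i => fun r => G r (f i)) ≠ ⊤} : ℝ) / (n:ℝ) ^ t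
        = ∑' t : ℕ, ∑ U ∈ W, (sc n t U : ℝ) / n ^ t := by
          refine tsum_congr fun t => ?_
          rw [hN t]
          push_cast
          rw [Finset.sum_div]
      _ = ∑ U ∈ W, ∑' t : ℕ, (sc n t U : ℝ) / n ^ t :=
          Summable.tsum_finsetSum fun U hU => summable_sc n U (hWcard U hU)
      _ = ∑ U ∈ W, 1 / ((n-1).choose U.card : ℝ) :=
          Finset.sum_congr rfl fun U hU => A_eq n U (hWcard U hU)
  set α : ℕ → ℕ := fun u => (Finset.univ.filter (fun S : Finset (Fin n) => S.card = u ∧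
      Submodule.span F ((fun j => fun r => G r j) '' (S : Set (Fin n))) = ⊤)).card with hα
  have hsplit : ∀ u : ℕ, ((W.filter (fun U => U.card = u)).card : ℝ)
      = (n.choose u : ℝ) - α u := by
    intro u
    have hys : (Finset.univ.filter (fun U : Finset (Fin n) => U.card = u)).card = n.choose u := by
      have h := Fintype.card_finset_len (α := Fin n) u
      rw [Fintype.card_subtype, Fintype.card_fin] at h
      exact h
    have key := Finset.card_filter_add_card_filter_not
      (s := Finset.univ.filter (fun U : Finset (Fin n) => U.card = u))
      (p := fun U => Submodule.span F ((fun j => fun r => G r j) '' (U : Set (Fin n))) = ⊤)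
    have e1 : (Finset.univ.filter (fun U : Finset (Fin n) => U.card = u)).filter
        (fun U : Finset (Fin n) => Submodule.span F ((fun j => fun r => G r j) '' (U : Set (Fin n))) = ⊤)
        = Finset.univ.filter (fun S : Finset (Fin n) => S.card = u ∧
          Submodule.span F ((fun j => fun r => G r j) '' (S : Set (Fin n))) = ⊤) := by
      rw [Finset.filter_filter]
    have e2 : (Finset.univ.filter (fun U : Finset (Fin n) => U.card = u)).filter
        (fun U : Finset (Fin n) => ¬ Submodule.span F ((fun j => fun r => G r j) '' (U : Set (Fin n))) = ⊤)
        = W.filter (fun U => U.card = u) := by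
      rw [Finset.filter_filter, hW, Finset.filter_filter]
      apply Finset.filter_congr
      intro U _
      tauto
    rw [e1, e2, hys] at key
    have key2 := congrArg (Nat.cast : ℕ → ℝ) key
    push_cast at key2
    rw [hα]
    linarith
  have hgroup : ∑ U ∈ W, 1 / (((n-1).choose U.card : ℕ) : ℝ)
      = ∑ u ∈ Finset.range n, ((n.choose u : ℝ) - α u) * (1 / ((n-1).choose u : ℝ)) := by
    rw [← Finset.sum_fiberwise_of_maps_to (g := fun U : Finset (Fin n) => U.card)
      (t := Finset.range n) (fun U hU => Finset.mem_range.mpr (hWcard U hU))]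
    refine Finset.sum_congr rfl fun u hu => ?_
    calc ∑ U ∈ W.filter (fun U => U.card = u), 1 / (((n-1).choose U.card : ℕ) : ℝ)
        = ∑ U ∈ W.filter (fun U => U.card = u), 1 / ((n-1).choose u : ℝ) := by
          refine Finset.sum_congr rfl fun U hU => ?_
          rw [Finset.mem_filter] at hU
          rw [hU.2]
      _ = ((W.filter (fun U => U.card = u)).card : ℝ) * (1 / ((n-1).choose u : ℝ)) := by
          rw [Finset.sum_const, nsmul_eq_mul]
      _ = ((n.choose u : ℝ) - α u) * (1 / ((n-1).choose u : ℝ)) := by rw [hsplit u]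
  have hharm : ∑ u ∈ Finset.range n, (n.choose u : ℝ) * (1 / ((n-1).choose u : ℝ))
      = n * harm n := by
    have hterm : ∀ u ∈ Finset.range n, (n.choose u : ℝ) * (1 / ((n-1).choose u : ℝ))
        = (n:ℝ) / ((n:ℝ) - u) := by
      intro u hu
      rw [Finset.mem_range] at hu
      have hCb : ((n-1).choose u : ℝ) ≠ 0 := by
        have : 0 < (n-1).choose u := Nat.choose_pos (by omega)
        positivity
      have hnu : ((n:ℝ) - u) ≠ 0 := by
        have : (u:ℝ) < n := by exact_mod_cast hu
        linarith
      rw [mul_one_div, div_eq_div_iff hCb hnu]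
      have h := Nat.choose_mul_succ_eq (n-1) u
      have e : n - 1 + 1 = n := by omega
      rw [e] at h
      have h2 := congrArg (Nat.cast : ℕ → ℝ) h
      push_cast [Nat.cast_sub (le_of_lt hu)] at h2
      linarith
    rw [Finset.sum_congr rfl hterm]
    have hreflect := Finset.sum_range_reflect (fun j : ℕ => (n:ℝ) / ((j:ℝ) + 1)) n
    have hmatch : ∀ u ∈ Finset.range n,
        (n:ℝ) / ((n:ℝ) - u) = (n:ℝ) / (((n - 1 - u : ℕ) : ℝ) + 1) := by
      intro u hu
      rw [Finset.mem_range] at hu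
      congr 1
      rw [Nat.cast_sub (by omega : u ≤ n - 1), Nat.cast_sub (by omega : 1 ≤ n)]
      push_cast
      ring
    rw [Finset.sum_congr rfl hmatch, hreflect, harm, Finset.mul_sum]
    exact Finset.sum_congr rfl fun i _ => by rw [mul_one_div]
  have hαsum : ∑ u ∈ Finset.range n, (α u : ℝ) * (1 / ((n-1).choose u : ℝ))
      = ∑ s ∈ Finset.Icc k (n-1), (α s : ℝ) / ((n-1).choose s : ℝ) := by
    have h1 : ∀ u ∈ Finset.range n, (α u : ℝ) * (1 / ((n-1).choose u : ℝ))
        = (α u : ℝ) / ((n-1).choose u : ℝ) := fun u _ => mul_one_div _ _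
    rw [Finset.sum_congr rfl h1]
    symm
    apply Finset.sum_subset
    · intro x hx
      rw [Finset.mem_Icc] at hx
      exact Finset.mem_range.mpr (by omega)
    · intro x hx hnx
      rw [Finset.mem_range] at hx
      rw [Finset.mem_Icc] at hnx
      have hzero : α x = 0 := by
        rw [hα, Finset.card_eq_zero, Finset.filter_eq_empty_iff]
        rintro S _ ⟨h1, h2⟩
        exact absurd (hcard_span S h2) (by omega)
      rw [hzero]
      simp
  have hNatcard : ∀ s : ℕ, (Nat.card {S : Finset (Fin n) // S.card = s ∧
      Submodule.span F ((fun j => fun r => G r j) '' (S : Set (Fin n))) = ⊤} : ℕ) = α s := by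
    intro s
    rw [hα, Nat.card_eq_fintype_card, Fintype.card_subtype]
  have hsplit2 : ∑ u ∈ Finset.range n, ((n.choose u : ℝ) - α u) * (1 / ((n-1).choose u : ℝ))
      = ∑ u ∈ Finset.range n, (n.choose u : ℝ) * (1 / ((n-1).choose u : ℝ))
        - ∑ u ∈ Finset.range n, (α u : ℝ) * (1 / ((n-1).choose u : ℝ)) := by
    rw [← Finset.sum_sub_distrib]
    exact Finset.sum_congr rfl fun u _ => by ring
  rw [hcover, hgroup, hsplit2, hharm, hαsum]
  congr 1
  exact Finset.sum_congr rfl fun s _ => by rw [hNatcard s]
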